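/- Let A be a non-empty set and f : A → ℂ a bounded function. Then x ∈ ℝ is a Fréchet cluster point of the function a ↦ |f(a)| if and only if there exists a Fréchet cluster point z of f with |z| = x. -/

import Mathlib

open Filter Set Topology

noncomputable section

/-- `z` is a Fréchet cluster point of `f` : for every `ε > 0` and every set `B` in the
Fréchet (cofinite) filter on `A` there is `a ∈ B` with `dist (f a) z < ε`. -/
def FrechetClusterPt {A X : Type*} [PseudoMetricSpace X] (f : A → X) (z : X) : Prop :=
  ∀ ε > 0, ∀ B ∈ (Filter.cofinite : Filter A), ∃ a ∈ B, dist (f a) z < ε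

/-- The Fréchet limit superior `limsup_F f = inf_{B ∈ F} sup f[B]`, the infimum over the
cofinite sets `B` of `sup f[B]`. -/
def frechetLimsup {A : Type*} (f : A → ℝ) : ℝ :=
  sInf ((fun B : Set A => sSup (f '' B)) '' {B | B ∈ (Filter.cofinite : Filter A)})

/-- The Fréchet limit inferior `liminf_F f = sup_{B ∈ F} inf f[B]`, the supremum over the
cofinite sets `B` of `inf f[B]`. -/
def frechetLiminf {A : Type*} (f : A → ℝ) : ℝ :=
  sSup ((fun B : Set A => sInf (f '' B)) '' {B | B ∈ (Filter.cofinite : Filter A)})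

lemma fcp_iff_mapClusterPt {A X : Type*} [PseudoMetricSpace X] (f : A → X) (z : X) :
    FrechetClusterPt f z ↔ MapClusterPt z (Filter.cofinite : Filter A) f := by
  rw [mapClusterPt_iff_frequently]
  constructor
  · intro h s hs
    obtain ⟨ε, hε, hball⟩ := Metric.mem_nhds_iff.mp hs
    rw [Filter.frequently_iff]
    intro B hB
    obtain ⟨a, haB, ha⟩ := h ε hε B hB
    exact ⟨a, haB, hball ha⟩
  · intro h ε hε B hB
    have := h (Metric.ball z ε) (Metric.ball_mem_nhds z hε)
    obtain ⟨a, haB, ha⟩ := Filter.frequently_iff.mp this hB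
    exact ⟨a, haB, ha⟩

/-- Let `A` be a non-empty set and `f : A → ℂ` a bounded function.
Then `x ∈ ℝ` is a Fréchet cluster point of `a ↦ |f a|` iff there is a Fréchet cluster
point `z` of `f` with `|z| = x`. -/
theorem stmt9 {A : Type*} [Nonempty A] (f : A → ℂ)
    (hf : ∃ M : ℝ, ∀ a : A, ‖f a‖ ≤ M) (x : ℝ) :
    FrechetClusterPt (fun a => ‖f a‖) x ↔
      ∃ z : ℂ, FrechetClusterPt f z ∧ ‖z‖ = x := by
  constructor
  · intro h
    obtain ⟨M, hM⟩ := hf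
    set g : A → ℝ := fun a => ‖f a‖ with hg
    have hmc : MapClusterPt x (Filter.cofinite : Filter A) g :=
      (fcp_iff_mapClusterPt g x).mp h
    have hne : (𝓝 x ⊓ Filter.map g Filter.cofinite).NeBot := hmc
    set F : Filter A := Filter.cofinite ⊓ Filter.comap g (𝓝 x) with hF
    have hpush : Filter.map g F = Filter.map g Filter.cofinite ⊓ 𝓝 x :=
      Filter.push_pull g Filter.cofinite (𝓝 x)
    have hFne : F.NeBot := by
      rw [← Filter.map_neBot_iff g, hpush]
      exact hne.mono (le_of_eq (inf_comm _ _))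
    have hle : Filter.map f F ≤ Filter.principal (Metric.closedBall (0 : ℂ) M) := by
      rw [Filter.le_principal_iff, Filter.mem_map]
      apply Filter.univ_mem'
      intro a
      simpa [Metric.mem_closedBall, dist_eq_norm] using hM a
    have hcomp : IsCompact (Metric.closedBall (0 : ℂ) M) :=
      isCompact_closedBall 0 M
    have hmapne : (Filter.map f F).NeBot := Filter.map_neBot
    obtain ⟨z, _, hz⟩ := hcomp.exists_clusterPt hle
    refine ⟨z, ?_, ?_⟩
    · rw [fcp_iff_mapClusterPt]
      exact hz.mono (Filter.map_mono inf_le_left)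
    · have htend : Filter.Tendsto (fun w : ℂ => ‖w‖) (Filter.map f F) (𝓝 x) := by
        have : Filter.map (fun w : ℂ => ‖w‖) (Filter.map f F) = Filter.map g F := by
          rw [Filter.map_map]; rfl
        rw [Filter.Tendsto, this, hpush]
        exact inf_le_right
      have hcl : ClusterPt ‖z‖ (𝓝 x) :=
        hz.map (continuous_norm.continuousAt) htend
      exact t2_iff_nhds.mp inferInstance hcl
  · rintro ⟨z, hz, rfl⟩
    intro ε hε B hB
    obtain ⟨a, haB, ha⟩ := hz ε hε B hB
    refine ⟨a, haB, lt_of_le_of_lt ?_ ha⟩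
    rw [Real.dist_eq, dist_eq_norm]
    exact abs_norm_sub_norm_le _ _
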